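/- Let G be a groupoid with finitely many arrows and π a ℂ-algebra homomorphism from the convolution algebra of complex-valued functions on the arrows of G to the algebra of n×n complex matrices, satisfying π(f*) = (π(f))ᴴ (conjugate transpose) for all f. Let ρ̂ be an n×n positive semidefinite Hermitian complex matrix. Then the function φ_ρ(α) = Tr(ρ̂ · π(δ_α)) is a positive semi-definite function on G, where δ_α is the indicator function of the arrow α. -/

import Mathlib

open CategoryTheory
open scoped ComplexOrder Classical

universe u

/-- The set of arrows of a groupoid with object type `Ω`. -/
abbrev GArrow (Ω : Type u) [Groupoid Ω] : Type u := Σ x y : Ω, x ⟶ y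

namespace GArrow

variable {Ω : Type u} [Groupoid Ω]

/-- Source of an arrow. -/
def src (α : GArrow Ω) : Ω := α.1

/-- Target of an arrow. -/
def tgt (α : GArrow Ω) : Ω := α.2.1

/-- Inverse of an arrow. -/
def inv (α : GArrow Ω) : GArrow Ω := ⟨α.2.1, α.1, Groupoid.inv α.2.2⟩

/-- The identity arrow at an object. -/
def id (x : Ω) : GArrow Ω := ⟨x, x, 𝟙 x⟩

/-- The composite `α ∘ β` (first apply `β`, then `α`), defined when `t(β) = s(α)`. -/
def comp (α β : GArrow Ω) (h : β.tgt = α.src) : GArrow Ω :=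
  ⟨β.1, α.2.1, (β.2.2 ≫ eqToHom h) ≫ α.2.2⟩

/-- The composite `α⁻¹ ∘ β`, defined when `t(α) = t(β)`. -/
def invComp (α β : GArrow Ω) (h : α.tgt = β.tgt) : GArrow Ω :=
  ⟨β.1, α.1, (β.2.2 ≫ eqToHom h.symm) ≫ Groupoid.inv α.2.2⟩

end GArrow

/-- A function on the arrows of a groupoid is positive semi-definite if for all
`ξ : Fin n → ℂ` and arrows `α : Fin n → GArrow Ω`, the sum over pairs `(i, j)` with
`t(α i) = t(α j)` of `conj (ξ i) * ξ j * φ ((α i)⁻¹ ∘ α j)` is a nonnegative real number. -/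
def IsPosSemidefFun {Ω : Type u} [Groupoid Ω] (φ : GArrow Ω → ℂ) : Prop :=
  ∀ (n : ℕ) (ξ : Fin n → ℂ) (α : Fin n → GArrow Ω),
    0 ≤ ∑ i, ∑ j,
      if h : (α i).tgt = (α j).tgt then
        (starRingEnd ℂ) (ξ i) * ξ j * φ (GArrow.invComp (α i) (α j) h)
      else 0

/-- The convolution product on complex functions on the arrows of a finite groupoid. -/
noncomputable def conv {Ω : Type u} [Groupoid Ω] [Fintype Ω] [∀ x y : Ω, Fintype (x ⟶ y)]
    (f g : GArrow Ω → ℂ) (γ : GArrow Ω) : ℂ :=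
  ∑ α : GArrow Ω, ∑ β : GArrow Ω,
    if h : β.tgt = α.src then (if GArrow.comp α β h = γ then f α * g β else 0) else 0

/-- The involution `f*(α) = conj (f (α⁻¹))` on functions on arrows. -/
def starFun {Ω : Type u} [Groupoid Ω] (f : GArrow Ω → ℂ) (α : GArrow Ω) : ℂ :=
  (starRingEnd ℂ) (f (GArrow.inv α))

/-- The unit of the convolution algebra: the indicator of the set of identity arrows. -/
noncomputable def convOne {Ω : Type u} [Groupoid Ω] (γ : GArrow Ω) : ℂ :=
  if γ = GArrow.id γ.src then 1 else 0

/-- The indicator function of a single arrow. -/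
noncomputable def delta {Ω : Type u} [Groupoid Ω] (α : GArrow Ω) (β : GArrow Ω) : ℂ :=
  if β = α then 1 else 0


section Aux

open CategoryTheory Matrix
open scoped ComplexOrder Classical

variable {Ω : Type u} [Groupoid Ω] [Fintype Ω] [∀ x y : Ω, Fintype (x ⟶ y)]

omit [Fintype Ω] [∀ x y : Ω, Fintype (x ⟶ y)] in
lemma GArrow.inv_inv' (α : GArrow Ω) : α.inv.inv = α := by
  obtain ⟨a, b, f⟩ := α
  simp [GArrow.inv, Groupoid.inv_eq_inv]

omit [Fintype Ω] [∀ x y : Ω, Fintype (x ⟶ y)] in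
lemma starFun_delta (α : GArrow Ω) : starFun (delta α) = delta α.inv := by
  funext β
  have : β.inv = α ↔ β = α.inv := by
    constructor
    · rintro rfl; exact (GArrow.inv_inv' β).symm
    · rintro rfl; exact GArrow.inv_inv' α
  simp [starFun, delta, this]

lemma conv_delta (x y : GArrow Ω) :
    conv (delta x) (delta y) =
      fun γ => if h : y.tgt = x.src then delta (GArrow.comp x y h) γ else 0 := by
  funext γ
  unfold conv
  rw [Finset.sum_eq_single_of_mem x (Finset.mem_univ x)]
  · rw [Finset.sum_eq_single_of_mem y (Finset.mem_univ y)]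
    · by_cases h : y.tgt = x.src <;> simp [h, delta, eq_comm]
    · intro b _ hb; by_cases h : b.tgt = x.src <;> simp [h, delta, hb]
  · intro a _ ha
    apply Finset.sum_eq_zero
    intro b _
    by_cases h : b.tgt = a.src <;> simp [h, delta, ha]

lemma trace_ctm_nonneg {n : ℕ} (B : Matrix (Fin n) (Fin n) ℂ) : 0 ≤ (Bᴴ * B).trace := by
  rw [Matrix.trace]
  apply Finset.sum_nonneg
  intro i _
  rw [Matrix.diag_apply, Matrix.mul_apply]
  apply Finset.sum_nonneg
  intro k _
  rw [Matrix.conjTranspose_apply]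
  exact star_mul_self_nonneg _

lemma trace_rho_nonneg {n : ℕ} (ρ : Matrix (Fin n) (Fin n) ℂ) (hρ : ρ.PosSemidef)
    (M : Matrix (Fin n) (Fin n) ℂ) : 0 ≤ (ρ * (Mᴴ * M)).trace := by
  open scoped MatrixOrder in obtain ⟨B, hB⟩ := CStarAlgebra.nonneg_iff_eq_star_mul_self.mp hρ.nonneg
  rw [Matrix.star_eq_conjTranspose] at hB
  have : (ρ * (Mᴴ * M)).trace = ((M * Bᴴ)ᴴ * (M * Bᴴ)).trace := by
    rw [hB, Matrix.conjTranspose_mul, Matrix.conjTranspose_conjTranspose]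
    simp only [mul_assoc]
    rw [Matrix.trace_mul_comm]
    simp only [mul_assoc]
  rw [this]
  exact trace_ctm_nonneg _

end Aux

/-- Let `π` be a `ℂ`-algebra homomorphism from the convolution algebra of a finite groupoid
to `n×n` complex matrices with `π(f*) = (π f).conjTranspose`, and let `ρ̂` be a positive semidefinite
Hermitian matrix. Then `φ_ρ(α) = Tr(ρ̂ · π(δ_α))` is positive semi-definite on the groupoid. -/
theorem trace_state_posSemidef {Ω : Type u} [Groupoid Ω] [Fintype Ω]
    [∀ x y : Ω, Fintype (x ⟶ y)] (n : ℕ)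
    (π : (GArrow Ω → ℂ) →ₗ[ℂ] Matrix (Fin n) (Fin n) ℂ)
    (hmul : ∀ f g : GArrow Ω → ℂ, π (conv f g) = π f * π g)
    (hone : π convOne = 1)
    (hstar : ∀ f : GArrow Ω → ℂ, π (starFun f) = (π f).conjTranspose)
    (ρ : Matrix (Fin n) (Fin n) ℂ) (hρ : ρ.PosSemidef) :
    IsPosSemidefFun (fun α : GArrow Ω => (ρ * π (delta α)).trace) := by
  intro m ξ α
  have hδ : ∀ a : GArrow Ω, (π (delta a)).conjTranspose = π (delta a.inv) := by
    intro a
    rw [← starFun_delta, hstar]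
  have key : ∀ a b : GArrow Ω, π (delta a.inv) * π (delta b) =
      if h : a.tgt = b.tgt then π (delta (a.invComp b h)) else 0 := by
    intro a b
    rw [← hmul, conv_delta]
    by_cases h : a.tgt = b.tgt
    · rw [dif_pos h]
      have hfun : (fun γ => if h2 : b.tgt = a.inv.src then
          delta (GArrow.comp a.inv b h2) γ else 0) = delta (a.invComp b h) := by
        funext γ
        rw [dif_pos (show b.tgt = a.inv.src from h.symm)]
        rfl
      rw [hfun]
    · rw [dif_neg h]
      have hfun : (fun γ => if h2 : b.tgt = a.inv.src then
          delta (GArrow.comp a.inv b h2) γ else 0) = (0 : GArrow Ω → ℂ) := by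
        funext γ
        rw [dif_neg]
        · rfl
        · intro h2; exact h h2.symm
      rw [hfun, map_zero]
  set M : Matrix (Fin n) (Fin n) ℂ := ∑ i, ξ i • π (delta (α i)) with hM
  have expand : (ρ * (M.conjTranspose * M)).trace =
      ∑ i, ∑ j, if h : (α i).tgt = (α j).tgt then
        (starRingEnd ℂ) (ξ i) * ξ j * (ρ * π (delta ((α i).invComp (α j) h))).trace
      else 0 := by
    rw [hM]
    simp only [Matrix.conjTranspose_sum, Matrix.conjTranspose_smul, hδ,
      Finset.sum_mul, Finset.mul_sum, Matrix.smul_mul, Matrix.mul_smul, smul_smul,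
      Matrix.trace_sum, Matrix.trace_smul, smul_eq_mul, key, RCLike.star_def]
    rw [Finset.sum_comm]
    refine Finset.sum_congr rfl fun i _ => Finset.sum_congr rfl fun j _ => ?_
    by_cases h : (α i).tgt = (α j).tgt <;> simp [h, mul_comm, mul_left_comm, mul_assoc]
  rw [← expand]
  exact trace_rho_nonneg ρ hρ M
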